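/- Let k be a perfect field of characteristic p > 0 and M a k-vector space. Then the k[Z/pZ]-module M^{⊗p} (cyclic permutation action) is tight: the map Coker(tr) → Ker(tr) induced by the canonical map from invariants to coinvariants is an isomorphism. -/

import Mathlib

open scoped TensorProduct

/-- The cyclic permutation `σ` of the `p`-th tensor power `M^{⊗p}`, as a `k`-linear map. -/
noncomputable def cyclicPerm (k M : Type*) [CommRing k] [AddCommGroup M] [Module k M]
    (p : ℕ) :
    PiTensorProduct k (fun _ : Fin p => M) →ₗ[k] PiTensorProduct k (fun _ : Fin p => M) :=
  (PiTensorProduct.reindex k (fun _ : Fin p => M) (finRotate p)).toLinearMap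

/-- A `k`-linear endomorphism `σ` (thought of as generating a `Z/pZ`-action) is *tight* if
the map `Coker(tr) → Ker(tr)` induced by the canonical map `e : M^σ → M_σ` is an
isomorphism, where `tr = N = 1 + σ + ⋯ + σ^{p-1}`.  Unwound: (surjectivity) every `x` with
`N x = 0` is congruent modulo `range (1 - σ)` (i.e. modulo elements `y - σ y`) to an
invariant element; (injectivity) every invariant element which lies in `range (1 - σ)`
lies in the image of `N`. -/
def IsTight {k M : Type*} [CommRing k] [AddCommGroup M] [Module k M] (p : ℕ)
    (σ : M →ₗ[k] M) : Prop :=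
  (∀ x : M, (∑ i ∈ Finset.range p, σ ^ i) x = 0 →
      ∃ m y : M, σ m = m ∧ x = m + (y - σ y)) ∧
  (∀ m : M, σ m = m → (∃ y : M, m = y - σ y) →
      ∃ y : M, m = (∑ i ∈ Finset.range p, σ ^ i) y)

section Perm

variable {I : Type*} (τ : Equiv.Perm I) (p : ℕ)

lemma perm_pow_apply (n : ℕ) : ∀ i : I, (τ ^ n) i = (⇑τ)^[n] i := by
  induction n with
  | zero => intro i; rfl
  | succ n ih =>
      intro i
      rw [pow_succ, Equiv.Perm.mul_apply, Function.iterate_succ_apply, ih]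

lemma fixed_pow {i : I} (h : τ i = i) (n : ℕ) : (τ ^ n) i = i := by
  induction n with
  | zero => rfl
  | succ n ih => rw [pow_succ, Equiv.Perm.mul_apply, h, ih]

variable {τ p} (hp : p.Prime) (hτ : τ ^ p = 1)

include hp hτ in
lemma period_inj {i : I} (hfree : τ i ≠ i) :
    ∀ a < p, ∀ b < p, (τ ^ a) i = (τ ^ b) i → a = b := by
  have hper : Function.IsPeriodicPt ⇑τ p i := by
    show (⇑τ)^[p] i = i
    rw [← perm_pow_apply, hτ]; rfl
  have hmp : Function.minimalPeriod ⇑τ i = p := by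
    rcases hp.eq_one_or_self_of_dvd _ hper.minimalPeriod_dvd with h1 | h
    · exact absurd (Function.minimalPeriod_eq_one_iff_isFixedPt.mp h1) hfree
    · exact h
  intro a ha b hb hab
  refine Function.iterate_injOn_Iio_minimalPeriod (f := ⇑τ) (x := i) ?_ ?_ ?_
  · rw [hmp]; exact ha
  · rw [hmp]; exact hb
  · show (⇑τ)^[a] i = (⇑τ)^[b] i
    rw [← perm_pow_apply, ← perm_pow_apply]; exact hab

include hτ in
lemma free_of_free_pow {i : I} (hfree : τ i ≠ i) {j : ℕ} (hj : j ≤ p) :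
    τ ((τ ^ j) i) ≠ (τ ^ j) i := by
  intro hfix
  apply hfree
  have h1 : (τ ^ (p - j)) ((τ ^ j) i) = (τ ^ j) i := fixed_pow _ hfix _
  have h2 : (τ ^ (p - j)) ((τ ^ j) i) = i := by
    rw [← Equiv.Perm.mul_apply, ← pow_add, Nat.sub_add_cancel hj, hτ]; rfl
  have h3 : (τ ^ j) i = i := h1.symm.trans h2
  rw [h3] at hfix
  exact hfix

/-- The orbit relation for the cyclic group generated by `τ`. -/
def orbRel (τ : Equiv.Perm I) (p : ℕ) (i j : I) : Prop := ∃ n, n < p ∧ (τ ^ n) i = j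

include hp in
lemma orbRel_refl (i : I) : orbRel τ p i i := ⟨0, hp.pos, rfl⟩

include hτ in
lemma orbRel_symm {i j : I} : orbRel τ p i j → orbRel τ p j i := by
  rintro ⟨n, hn, rfl⟩
  rcases Nat.eq_zero_or_pos n with rfl | hn0
  · exact ⟨0, hn, rfl⟩
  · refine ⟨p - n, by omega, ?_⟩
    rw [← Equiv.Perm.mul_apply, ← pow_add, Nat.sub_add_cancel hn.le, hτ]; rfl

include hp hτ in
lemma orbRel_trans {i j l : I} : orbRel τ p i j → orbRel τ p j l → orbRel τ p i l := by
  rintro ⟨n, hn, rfl⟩ ⟨m, hm, rfl⟩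
  refine ⟨(m + n) % p, Nat.mod_lt _ hp.pos, ?_⟩
  rw [← pow_eq_pow_mod _ hτ, pow_add, Equiv.Perm.mul_apply]

/-- The setoid of orbits. -/
def orbSetoid : Setoid I :=
  ⟨orbRel τ p, ⟨orbRel_refl hp, orbRel_symm hτ, orbRel_trans hp hτ⟩⟩

/-- A choice of representative in each orbit. -/
noncomputable def rp (i : I) : I := Quotient.out (Quotient.mk (orbSetoid hp hτ) i)

lemma rp_rel (i : I) : orbRel τ p (rp hp hτ i) i :=
  Quotient.exact (Quotient.out_eq (Quotient.mk (orbSetoid hp hτ) i))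

lemma rp_eq_of_rel {i j : I} (h : orbRel τ p i j) : rp hp hτ i = rp hp hτ j := by
  unfold rp
  congr 1
  exact Quotient.sound h

lemma rp_tau (i : I) : rp hp hτ (τ i) = rp hp hτ i :=
  (rp_eq_of_rel hp hτ ⟨1, hp.one_lt, pow_one τ ▸ rfl⟩).symm

lemma rp_pow (n : ℕ) (i : I) : rp hp hτ ((τ ^ n) i) = rp hp hτ i := by
  induction n with
  | zero => rfl
  | succ n ih => rw [pow_succ', Equiv.Perm.mul_apply, rp_tau hp hτ, ih]

lemma rp_fixed {i : I} (h : τ i = i) : rp hp hτ i = i := by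
  obtain ⟨n, _, hn⟩ := orbRel_symm hτ (rp_rel hp hτ i)
  rw [← hn, fixed_pow _ h]

lemma rp_free {i : I} (h : τ i ≠ i) : τ (rp hp hτ i) ≠ rp hp hτ i := by
  intro hfix
  obtain ⟨n, _, hn⟩ := rp_rel hp hτ i
  rw [fixed_pow _ hfix] at hn
  exact h (hn ▸ hfix)

lemma exists_pow_rp (i : I) : ∃ n, (τ ^ n) (rp hp hτ i) = i := by
  obtain ⟨n, _, hn⟩ := rp_rel hp hτ i
  exact ⟨n, hn⟩

open Classical in
/-- The "distance" of `i` from the representative of its orbit. -/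
noncomputable def dd (i : I) : ℕ := Nat.find (exists_pow_rp hp hτ i)

lemma dd_spec (i : I) : (τ ^ dd hp hτ i) (rp hp hτ i) = i := by
  classical exact Nat.find_spec (exists_pow_rp hp hτ i)

lemma dd_lt (i : I) : dd hp hτ i < p := by
  obtain ⟨n, hn, hspec⟩ := rp_rel hp hτ i
  classical exact lt_of_le_of_lt (Nat.find_min' _ hspec) hn

end Perm

section FinsuppOps

variable (k : Type*) [Field k] {I : Type*}

/-- The shift operator on `I →₀ k` induced by a permutation of `I`. -/
noncomputable def shiftL (τ : Equiv.Perm I) : (I →₀ k) →ₗ[k] (I →₀ k) :=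
  (Finsupp.domLCongr τ : (I →₀ k) ≃ₗ[k] (I →₀ k)).toLinearMap

variable {k}

lemma shiftL_single (τ : Equiv.Perm I) (i : I) (c : k) :
    shiftL k τ (Finsupp.single i c) = Finsupp.single (τ i) c := by
  simp [shiftL]

lemma shiftL_apply (τ : Equiv.Perm I) (x : I →₀ k) (a : I) :
    shiftL k τ x a = x (τ.symm a) := by
  simp [shiftL, Finsupp.domLCongr_apply, Finsupp.equivMapDomain_apply]

lemma shiftL_pow_single (τ : Equiv.Perm I) (n : ℕ) :
    ∀ (i : I) (c : k), (shiftL k τ ^ n) (Finsupp.single i c) = Finsupp.single ((τ ^ n) i) c := by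
  induction n with
  | zero => intro i c; rfl
  | succ n ih =>
      intro i c
      rw [pow_succ, Module.End.mul_apply, shiftL_single, ih, pow_succ, Equiv.Perm.mul_apply]

lemma shiftL_pow (τ : Equiv.Perm I) (n : ℕ) :
    shiftL k τ ^ n = shiftL k (τ ^ n) := by
  apply Finsupp.lhom_ext
  intro a b
  rw [shiftL_pow_single, shiftL_single]

open Classical in
/-- Linear projection given by `Finsupp.filter`. -/
noncomputable def filterL (q : I → Prop) : (I →₀ k) →ₗ[k] (I →₀ k) where
  toFun x := x.filter q
  map_add' x y := by
    ext a
    by_cases h : q a <;> simp [h]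
  map_smul' c x := by
    ext a
    by_cases h : q a <;> simp [h]

open Classical in
lemma filterL_apply (q : I → Prop) (x : I →₀ k) (a : I) :
    filterL q x a = if q a then x a else 0 := by
  by_cases h : q a <;> simp [filterL, h]

open Classical in
lemma filterL_single (q : I → Prop) (i : I) (c : k) :
    filterL q (Finsupp.single i c) = if q i then Finsupp.single i c else 0 := by
  by_cases h : q i <;> simp [filterL, h]

variable (k) in
/-- Projection onto coordinates fixed by `τ`. -/
noncomputable def pfix (τ : Equiv.Perm I) : (I →₀ k) →ₗ[k] (I →₀ k) :=
  filterL (fun i => τ i = i)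

variable {τ : Equiv.Perm I} {p : ℕ} (hp : p.Prime) (hτ : τ ^ p = 1)

variable (k) in
/-- Projection onto coordinates which are orbit representatives of free orbits. -/
noncomputable def repL : (I →₀ k) →ₗ[k] (I →₀ k) :=
  filterL (fun i => τ i ≠ i ∧ rp hp hτ i = i)

open Classical in
variable (k) in
/-- The "contracting homotopy". -/
noncomputable def hh : (I →₀ k) →ₗ[k] (I →₀ k) :=
  Finsupp.lsum k (fun i =>
    if τ i = i then 0
    else ∑ l ∈ Finset.range (dd hp hτ i + 1), Finsupp.lsingle ((τ ^ l) (rp hp hτ i)))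

lemma trace_single (i : I) (c : k) :
    (∑ j ∈ Finset.range p, shiftL k τ ^ j) (Finsupp.single i c)
      = ∑ j ∈ Finset.range p, Finsupp.single ((τ ^ j) i) c := by
  rw [LinearMap.coe_sum, Finset.sum_apply]
  exact Finset.sum_congr rfl fun j _ => shiftL_pow_single τ j i c

lemma shiftL_pfix : shiftL k τ * pfix k τ = pfix k τ := by
  apply Finsupp.lhom_ext
  intro a b
  rw [Module.End.mul_apply]
  unfold pfix
  by_cases h : τ a = a <;> simp [filterL_single, h, shiftL_single]

lemma pfix_shiftL : pfix k τ * shiftL k τ = pfix k τ := by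
  apply Finsupp.lhom_ext
  intro a b
  rw [Module.End.mul_apply, shiftL_single]
  unfold pfix
  by_cases h : τ a = a
  · rw [h]
  · have h2 : ¬ τ (τ a) = τ a := fun hc => h (τ.injective hc)
    simp [filterL_single, h, h2]

lemma pfix_idem : pfix k τ * pfix k τ = pfix k τ := by
  apply Finsupp.lhom_ext
  intro a b
  rw [Module.End.mul_apply]
  unfold pfix
  by_cases h : τ a = a <;> simp [filterL_single, h]

lemma pfix_shiftL_pow (n : ℕ) : pfix k τ * shiftL k τ ^ n = pfix k τ := by
  induction n with
  | zero => simp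
  | succ n ih => rw [pow_succ, ← mul_assoc, ih, pfix_shiftL]

variable [CharP k p]

include hp in
lemma trace_pfix : (∑ j ∈ Finset.range p, shiftL k τ ^ j) * pfix k τ = 0 := by
  apply Finsupp.lhom_ext
  intro a b
  rw [Module.End.mul_apply, LinearMap.zero_apply]
  unfold pfix
  rw [filterL_single]
  by_cases h : τ a = a
  · rw [if_pos h, trace_single]
    have : ∀ j ∈ Finset.range p, Finsupp.single ((τ ^ j) a) b = Finsupp.single a b :=
      fun j _ => by rw [fixed_pow τ h]
    rw [Finset.sum_congr rfl this, Finset.sum_const, Finset.card_range]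
    rw [← Nat.cast_smul_eq_nsmul k, CharP.cast_eq_zero k p, zero_smul]
  · rw [if_neg h, map_zero]

end FinsuppOps

section KeyIdentity

variable {k : Type*} [Field k] {I : Type*} {τ : Equiv.Perm I} {p : ℕ}
variable (hp : p.Prime) (hτ : τ ^ p = 1)

lemma shiftL_one : shiftL k (1 : Equiv.Perm I) = 1 := by
  apply Finsupp.lhom_ext
  intro a b
  rw [shiftL_single]
  rfl

include hτ in
lemma shiftL_pow_p : shiftL k τ ^ p = (1 : (I →₀ k) →ₗ[k] (I →₀ k)) := by
  rw [shiftL_pow, hτ, shiftL_one]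

lemma key_identity :
    (1 - shiftL k τ) * hh k hp hτ
      = repL k hp hτ * (∑ j ∈ Finset.range p, shiftL k τ ^ j)
        - shiftL k τ * (1 - pfix k τ) := by
  classical
  apply Finsupp.lhom_ext
  intro a b
  simp only [Module.End.mul_apply, LinearMap.sub_apply, Module.End.one_apply]
  by_cases h : τ a = a
  · -- fixed point
    have h1 : hh k hp hτ (Finsupp.single a b) = 0 := by
      rw [hh, Finsupp.lsum_single, if_pos h]
      rfl
    have h2 : pfix k τ (Finsupp.single a b) = Finsupp.single a b := by
      rw [pfix, filterL_single, if_pos h]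
    have h3 : repL k hp hτ ((∑ j ∈ Finset.range p, shiftL k τ ^ j) (Finsupp.single a b)) = 0 := by
      rw [trace_single, map_sum]
      refine Finset.sum_eq_zero fun j _ => ?_
      rw [fixed_pow τ h, repL, filterL_single, if_neg]
      rintro ⟨hne, -⟩
      exact hne h
    rw [h1, h2, h3, map_zero, sub_zero, sub_self, map_zero, sub_zero]
  · -- free point
    set ρ := rp hp hτ a with hρ
    have h1 : hh k hp hτ (Finsupp.single a b)
        = ∑ l ∈ Finset.range (dd hp hτ a + 1), Finsupp.single ((τ ^ l) ρ) b := by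
      rw [hh, Finsupp.lsum_single, if_neg h, LinearMap.coe_sum, Finset.sum_apply]
      rfl
    have h2 : pfix k τ (Finsupp.single a b) = 0 := by
      rw [pfix, filterL_single, if_neg h]
    have lhs_eq : hh k hp hτ (Finsupp.single a b)
        - shiftL k τ (hh k hp hτ (Finsupp.single a b))
        = Finsupp.single ρ b - Finsupp.single (τ a) b := by
      rw [h1, map_sum]
      have : ∀ l ∈ Finset.range (dd hp hτ a + 1),
          shiftL k τ (Finsupp.single ((τ ^ l) ρ) b) = Finsupp.single ((τ ^ (l + 1)) ρ) b := by
        intro l _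
        rw [shiftL_single, pow_succ', Equiv.Perm.mul_apply]
      rw [Finset.sum_congr rfl this, ← Finset.sum_sub_distrib,
        Finset.sum_range_sub' (fun l => Finsupp.single ((τ ^ l) ρ) b)]
      congr 2
      rw [pow_succ', Equiv.Perm.mul_apply, hρ, dd_spec]
    have hterm : ∀ j ∈ Finset.range p,
        repL k hp hτ (Finsupp.single ((τ ^ j) a) b)
          = if (τ ^ j) a = ρ then Finsupp.single ρ b else 0 := by
      intro j hj
      rw [repL, filterL_single]
      have hfree : τ ((τ ^ j) a) ≠ (τ ^ j) a :=
        free_of_free_pow hτ h (le_of_lt (Finset.mem_range.mp hj))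
      have hrp : rp hp hτ ((τ ^ j) a) = ρ := rp_pow hp hτ j a
      by_cases hc : (τ ^ j) a = ρ
      · rw [if_pos ⟨hfree, hrp.trans hc.symm⟩, if_pos hc, hc]
      · rw [if_neg, if_neg hc]
        rintro ⟨-, h2c⟩
        exact hc (hrp.symm.trans h2c).symm
    have h3 : repL k hp hτ ((∑ j ∈ Finset.range p, shiftL k τ ^ j) (Finsupp.single a b))
        = Finsupp.single ρ b := by
      rw [trace_single, map_sum, Finset.sum_congr rfl hterm]
      obtain ⟨n, hn, hna⟩ := orbRel_symm hτ (rp_rel hp hτ a)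
      rw [Finset.sum_eq_single_of_mem n (Finset.mem_range.mpr hn)]
      · rw [if_pos hna]
      · intro j hj hjn
        rw [if_neg]
        intro hja
        exact hjn (period_inj hp hτ h j (Finset.mem_range.mp hj) n hn (hja.trans hna.symm))
    rw [lhs_eq, h3, h2, sub_zero, shiftL_single]

end KeyIdentity

section Model

variable {k : Type*} [Field k] {I : Type*} {τ : Equiv.Perm I} {p : ℕ}

lemma trace_apply (v : I →₀ k) (a : I) :
    ((∑ j ∈ Finset.range p, shiftL k τ ^ j) v) a = ∑ j ∈ Finset.range p, v ((τ ^ j).symm a) := by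
  rw [LinearMap.coe_sum, Finset.sum_apply, Finsupp.finset_sum_apply]
  exact Finset.sum_congr rfl fun j _ => by rw [shiftL_pow, shiftL_apply]

theorem shiftL_isTight (hp : p.Prime) [CharP k p] (hτ : τ ^ p = 1) :
    IsTight p (shiftL k τ) := by
  classical
  constructor
  · -- surjectivity part
    intro x hx
    set σ : (I →₀ k) →ₗ[k] (I →₀ k) := shiftL k τ with hσ
    set N : (I →₀ k) →ₗ[k] (I →₀ k) := ∑ j ∈ Finset.range p, σ ^ j with hNdef
    set m : I →₀ k := pfix k τ x with hm
    have hσm : σ m = m := by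
      have := congrArg (fun f : (I →₀ k) →ₗ[k] (I →₀ k) => f x) (shiftL_pfix (τ := τ) (k := k))
      simpa [Module.End.mul_apply] using this
    set z : I →₀ k := x - m with hz
    have hNm : N m = 0 := by
      have h0 := congrArg (fun f : (I →₀ k) →ₗ[k] (I →₀ k) => f x) (trace_pfix (τ := τ) hp)
      simp only [Module.End.mul_apply, LinearMap.zero_apply] at h0
      exact h0
    have hNz : N z = 0 := by rw [hz, map_sub, hx, hNm, sub_zero]
    set w : I →₀ k := (σ ^ (p - 1)) z with hw
    have hNw : N w = 0 := by
      have hcomm : N * σ ^ (p - 1) = σ ^ (p - 1) * N := by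
        rw [hNdef, Finset.sum_mul, Finset.mul_sum]
        exact Finset.sum_congr rfl fun j _ => pow_mul_comm σ j (p - 1)
      calc N w = (N * σ ^ (p - 1)) z := rfl
      _ = (σ ^ (p - 1)) (N z) := by rw [hcomm]; rfl
      _ = 0 := by rw [hNz, map_zero]
    have hpfz : pfix k τ z = 0 := by
      have := congrArg (fun f : (I →₀ k) →ₗ[k] (I →₀ k) => f x) (pfix_idem (τ := τ) (k := k))
      simp only [Module.End.mul_apply] at this
      rw [hz, map_sub, hm, this, sub_self]
    have hpfw : pfix k τ w = 0 := by
      have := congrArg (fun f : (I →₀ k) →ₗ[k] (I →₀ k) => f z) (pfix_shiftL_pow (τ := τ) (k := k) (p - 1))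
      simp only [Module.End.mul_apply] at this
      rw [hw, this, hpfz]
    have hσw : σ w = z := by
      have h1 : σ * σ ^ (p - 1) = σ ^ p := by
        rw [← pow_succ']
        congr 1
        have := hp.pos
        omega
      calc σ w = (σ * σ ^ (p - 1)) z := rfl
      _ = (σ ^ p) z := by rw [h1]
      _ = z := by rw [shiftL_pow_p hτ, Module.End.one_apply]
    have hkey := congrArg (fun f : (I →₀ k) →ₗ[k] (I →₀ k) => f w) (key_identity hp hτ)
    simp only [Module.End.mul_apply, LinearMap.sub_apply, Module.End.one_apply] at hkey
    rw [hNw, map_zero, hpfw, sub_zero, hσw] at hkey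
    -- hkey : hh w - σ (hh w) = 0 - z
    refine ⟨m, -(hh k hp hτ w), hσm, ?_⟩
    have h2 : -(hh k hp hτ w) - σ (-(hh k hp hτ w)) = z := by
      rw [map_neg]
      rw [neg_sub_neg]
      rw [← neg_sub (hh k hp hτ w)]
      rw [hkey]
      abel
    rw [h2, hz]
    abel
  · -- injectivity part
    rintro m hσm ⟨y, hy⟩
    set σ : (I →₀ k) →ₗ[k] (I →₀ k) := shiftL k τ with hσ
    have hpm : pfix k τ m = 0 := by
      have := congrArg (fun f : (I →₀ k) →ₗ[k] (I →₀ k) => f y) (pfix_shiftL (τ := τ) (k := k))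
      simp only [Module.End.mul_apply] at this
      rw [hy, map_sub, this, sub_self]
    have hfixpt : ∀ a, τ a = a → m a = 0 := by
      intro a ha
      have := DFunLike.congr_fun hpm a
      rwa [pfix, filterL_apply, if_pos ha, Finsupp.zero_apply] at this
    have hinv : ∀ a, m (τ a) = m a := by
      intro a
      have h1 : shiftL k τ m (τ a) = m (τ.symm (τ a)) := shiftL_apply τ m (τ a)
      rw [hσm, Equiv.symm_apply_apply] at h1
      exact h1
    have hinvpow : ∀ (n : ℕ) (a : I), m ((τ ^ n) a) = m a := by
      intro n
      induction n with
      | zero => intro a; rfl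
      | succ n ih =>
          intro a
          rw [pow_succ', Equiv.Perm.mul_apply, hinv, ih]
    refine ⟨repL k hp hτ m, ?_⟩
    ext a
    rw [trace_apply]
    by_cases ha : τ a = a
    · rw [hfixpt a ha]
      refine (Finset.sum_eq_zero fun j _ => ?_).symm
      have hsa : (τ ^ j).symm a = a := (Equiv.symm_apply_eq _).mpr (fixed_pow τ ha j).symm
      rw [hsa, repL, filterL_apply, if_neg]
      rintro ⟨hne, -⟩
      exact hne ha
    · set ρ : I := rp hp hτ a with hρ
      have hρfree : τ ρ ≠ ρ := rp_free hp hτ ha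
      have hterm : ∀ j ∈ Finset.range p,
          repL k hp hτ m ((τ ^ j).symm a) = if (τ ^ j) ρ = a then m a else 0 := by
        intro j _
        have hbj : (τ ^ j) ((τ ^ j).symm a) = a := Equiv.apply_symm_apply _ a
        have hbfree : τ ((τ ^ j).symm a) ≠ (τ ^ j).symm a := by
          intro hfix
          have h2 := fixed_pow τ hfix j
          have h3 : (τ ^ j).symm a = a := h2.symm.trans hbj
          rw [h3] at hfix
          exact ha hfix
        have hrpb : rp hp hτ ((τ ^ j).symm a) = ρ := by
          have h2 := rp_pow hp hτ j ((τ ^ j).symm a)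
          rw [hbj] at h2
          exact h2.symm
        rw [repL, filterL_apply]
        by_cases hc : (τ ^ j) ρ = a
        · have hbρ : (τ ^ j).symm a = ρ := (Equiv.symm_apply_eq _).mpr hc.symm
          rw [if_pos ⟨hbfree, hrpb.trans hbρ.symm⟩, if_pos hc, hbρ]
          have h3 : m a = m ρ := by
            conv_lhs => rw [← dd_spec hp hτ a, ← hρ]
            rw [hinvpow]
          rw [h3]
        · rw [if_neg, if_neg hc]
          rintro ⟨-, h2⟩
          apply hc
          have hbρ : (τ ^ j).symm a = ρ := h2.symm.trans hrpb
          rw [← hbρ, hbj]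
      rw [Finset.sum_congr rfl hterm]
      rw [Finset.sum_eq_single_of_mem (dd hp hτ a) (Finset.mem_range.mpr (dd_lt hp hτ a))]
      · rw [if_pos]
        rw [← hρ] at *
        exact (dd_spec hp hτ a)
      · intro j hj hjd
        rw [if_neg]
        intro hja
        exact hjd (period_inj hp hτ hρfree j (Finset.mem_range.mp hj) (dd hp hτ a)
          (dd_lt hp hτ a) (hja.trans (dd_spec hp hτ a).symm))

end Model

section Transport

variable {k V W : Type*} [Field k] [AddCommGroup V] [Module k V] [AddCommGroup W] [Module k W]

theorem IsTight.of_equiv (p : ℕ) (e : V ≃ₗ[k] W) (σV : V →ₗ[k] V) (σW : W →ₗ[k] W)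
    (hconj : ∀ v, σW (e v) = e (σV v)) (h : IsTight p σV) : IsTight p σW := by
  have hpow : ∀ (n : ℕ) (v : V), (σW ^ n) (e v) = e ((σV ^ n) v) := by
    intro n
    induction n with
    | zero => intro v; rfl
    | succ n ih =>
        intro v
        rw [pow_succ, Module.End.mul_apply, pow_succ, Module.End.mul_apply, hconj, ih]
  have hsum : ∀ v, (∑ i ∈ Finset.range p, σW ^ i) (e v) = e ((∑ i ∈ Finset.range p, σV ^ i) v) := by
    intro v
    rw [LinearMap.coe_sum, Finset.sum_apply, LinearMap.coe_sum, Finset.sum_apply, map_sum]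
    exact Finset.sum_congr rfl fun i _ => hpow i v
  obtain ⟨h1, h2⟩ := h
  constructor
  · intro x hx
    obtain ⟨m, y, hminv, hxe⟩ := h1 (e.symm x) (by
      apply e.injective
      rw [← hsum, e.apply_symm_apply, hx, map_zero])
    refine ⟨e m, e y, by rw [hconj, hminv], ?_⟩
    have h3 := congrArg e hxe
    rw [e.apply_symm_apply] at h3
    rw [h3, map_add, map_sub, hconj]
  · rintro m hminv ⟨y, hy⟩
    obtain ⟨y', hy'⟩ := h2 (e.symm m)
      (by
        apply e.injective
        rw [← hconj, e.apply_symm_apply]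
        exact hminv)
      ⟨e.symm y, by
        apply e.injective
        rw [map_sub, e.apply_symm_apply, ← hconj, e.apply_symm_apply]
        exact hy⟩
    refine ⟨e y', ?_⟩
    have h3 := congrArg e hy'
    rw [e.apply_symm_apply] at h3
    rw [h3, hsum]

end Transport

section FinRotate

open Fin.NatCast in
lemma finRotate_pow_apply (n : ℕ) (m : ℕ) (i : Fin (n + 1)) :
    ((finRotate (n + 1)) ^ m) i = i + (m : Fin (n + 1)) := by
  induction m with
  | zero => simp
  | succ m ih =>
      rw [pow_succ', Equiv.Perm.mul_apply, ih, finRotate_succ_apply]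
      push_cast
      rw [add_assoc]

open Fin.NatCast in
lemma finRotate_pow_self (n : ℕ) : (finRotate n) ^ n = 1 := by
  cases n with
  | zero => rfl
  | succ n =>
      ext i
      rw [finRotate_pow_apply n (n + 1) i]
      simp [Fin.natCast_self]

lemma arrowCongr_perm_pow {α β : Type*} (e : Equiv.Perm α) (n : ℕ) :
    (Equiv.arrowCongr e (Equiv.refl β) : Equiv.Perm (α → β)) ^ n
      = Equiv.arrowCongr (e ^ n) (Equiv.refl β) := by
  induction n with
  | zero =>
      ext f x
      rfl
  | succ n ih =>
      ext f x
      rw [pow_succ', Equiv.Perm.mul_apply, ih]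
      simp only [Equiv.arrowCongr_apply, Equiv.refl_apply, Function.comp_apply, Equiv.coe_refl,
        id_eq]
      congr 1

end FinRotate

section TensorBasis

open PiTensorProduct

variable {k M : Type*} [Field k] [AddCommGroup M] [Module k M] {S : Type*} (b : Module.Basis S k M)
  (p : ℕ)

/-- The map from the free module on `Fin p → S` to the tensor power. -/
noncomputable def psiMap : ((Fin p → S) →₀ k) →ₗ[k] PiTensorProduct k (fun _ : Fin p => M) :=
  Finsupp.lsum k (fun f => LinearMap.toSpanSingleton k _ (tprod k (fun i => b (f i))))

open Classical in
/-- The coordinate multilinear map. -/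
noncomputable def muMap : MultilinearMap k (fun _ : Fin p => M) ((Fin p → S) →₀ k) :=
  ((finsuppLequivDFinsupp (R := k) (M := k) (ι := Fin p → S)).symm.toLinearMap).compMultilinearMap
    ((MultilinearMap.dfinsuppFamily
        (fun _ : Fin p → S => MultilinearMap.mkPiAlgebra k (Fin p) k)).compLinearMap
      (fun _ : Fin p =>
        (finsuppLequivDFinsupp (R := k) (M := k) (ι := S)).toLinearMap ∘ₗ
          (b.repr : M →ₗ[k] (S →₀ k))))

/-- The coordinate map on the tensor power. -/
noncomputable def phiMap : PiTensorProduct k (fun _ : Fin p => M) →ₗ[k] ((Fin p → S) →₀ k) :=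
  PiTensorProduct.lift (muMap b p)

lemma muMap_basis (f : Fin p → S) :
    muMap b p (fun i => b (f i)) = Finsupp.single f 1 := by
  classical
  simp only [muMap, LinearMap.compMultilinearMap_apply, MultilinearMap.compLinearMap_apply,
    LinearMap.comp_apply, Module.Basis.repr_self, LinearEquiv.coe_coe]
  have h1 : ∀ i : Fin p,
      finsuppLequivDFinsupp (R := k) (M := k) (Finsupp.single (f i) (1 : k))
        = DFinsupp.single (f i) (1 : k) := fun i => Finsupp.toDFinsupp_single (f i) 1
  rw [funext h1]
  rw [MultilinearMap.dfinsuppFamily_single]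
  simp [MultilinearMap.mkPiAlgebra_apply, DFinsupp.toFinsupp_single]

lemma psi_single (f : Fin p → S) (c : k) :
    psiMap b p (Finsupp.single f c) = c • tprod k (fun i => b (f i)) := by
  simp [psiMap, LinearMap.toSpanSingleton_apply]

lemma phi_tprod (m : Fin p → M) : phiMap b p (tprod k m) = muMap b p m := by
  simp [phiMap]

lemma phi_psi : phiMap b p ∘ₗ psiMap b p = LinearMap.id := by
  apply Finsupp.lhom_ext
  intro f c
  rw [LinearMap.comp_apply, psi_single, map_smul, phi_tprod, muMap_basis]
  simp [Finsupp.smul_single]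

lemma psi_phi : psiMap b p ∘ₗ phiMap b p = LinearMap.id := by
  apply PiTensorProduct.ext
  apply Module.Basis.ext_multilinear (fun _ => b)
  intro v
  simp only [LinearMap.compMultilinearMap_apply, LinearMap.comp_apply, LinearMap.id_apply]
  rw [phi_tprod, muMap_basis, psi_single, one_smul]

lemma cyclic_psi (w : (Fin p → S) →₀ k) :
    cyclicPerm k M p (psiMap b p w)
      = psiMap b p (shiftL k (Equiv.arrowCongr (finRotate p) (Equiv.refl S)) w) := by
  have h : (cyclicPerm k M p) ∘ₗ psiMap b p
      = psiMap b p ∘ₗ shiftL k (Equiv.arrowCongr (finRotate p) (Equiv.refl S)) := by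
    apply Finsupp.lhom_ext
    intro f c
    rw [LinearMap.comp_apply, LinearMap.comp_apply, psi_single, map_smul, shiftL_single,
      psi_single, cyclicPerm]
    congr 1
    rw [LinearEquiv.coe_coe, PiTensorProduct.reindex_tprod]
    congr 1
  exact congrArg (fun g : _ →ₗ[k] _ => g w) h

end TensorBasis

/-- Over a perfect field `k` of characteristic `p`, the `k[Z/pZ]`-module
`M^{⊗p}` with the cyclic permutation action is tight: the map `Coker(tr) → Ker(tr)`
induced by the canonical map from invariants to coinvariants is an isomorphism. -/
theorem tensorPower_isTight {k M : Type*} [Field k] [PerfectField k] (p : ℕ)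
    [Fact p.Prime] [CharP k p] [AddCommGroup M] [Module k M] :
    IsTight p (cyclicPerm k M p) := by
  classical
  have hp : p.Prime := Fact.out
  set S := Module.Basis.ofVectorSpaceIndex k M
  set b : Module.Basis S k M := Module.Basis.ofVectorSpace k M with hb
  set τ : Equiv.Perm (Fin p → S) := Equiv.arrowCongr (finRotate p) (Equiv.refl S) with hτdef
  have hτ : τ ^ p = 1 := by
    rw [hτdef, arrowCongr_perm_pow, finRotate_pow_self]
    ext f
    simp
    rfl
  exact IsTight.of_equiv p
    (LinearEquiv.ofLinear (psiMap b p) (phiMap b p) (psi_phi b p) (phi_psi b p))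
    (shiftL k τ) (cyclicPerm k M p)
    (fun w => by
      rw [LinearEquiv.ofLinear_apply, LinearEquiv.ofLinear_apply]
      exact cyclic_psi b p w)
    (shiftL_isTight hp hτ)
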